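/- For every n ≥ 1, with m = n(n−1)/2, there exists an injective group homomorphism φ : UT(n,ℚ) → UT(m+1,ℚ) such that φ(g) is essentially hyperbolic for every g ≠ 1. -/

import Mathlib

section Matrices

variable {R : Type*} {n : ℕ}

theorem diag_mul_of_triangular [CommRing R] {A B : Matrix (Fin n) (Fin n) R}
    (hA : A.BlockTriangular id) (hB : B.BlockTriangular id) (i : Fin n) :
    (A * B) i i = A i i * B i i := by
  rw [Matrix.mul_apply]
  apply Finset.sum_eq_single i
  · intro k _ hk
    rcases lt_or_gt_of_ne hk with h | h
    · rw [hA (show (id : Fin n → Fin n) k < id i from h), zero_mul]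
    · rw [hB (show (id : Fin n → Fin n) i < id k from h), mul_zero]
  · intro h; exact absurd (Finset.mem_univ i) h

/-- The group `UT(n,R)` of upper triangular `n × n` matrices over `R` with all diagonal
entries equal to `1`, realised as a subgroup of the group of units of the matrix ring. -/
def UT (n : ℕ) (R : Type*) [CommRing R] : Subgroup (Matrix (Fin n) (Fin n) R)ˣ where
  carrier := {A | (∀ i j : Fin n, j < i → (A : Matrix (Fin n) (Fin n) R) i j = 0) ∧
    ∀ i : Fin n, (A : Matrix (Fin n) (Fin n) R) i i = 1}
  one_mem' := by
    refine ⟨fun i j hij => ?_, fun i => ?_⟩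
    · simp [Matrix.one_apply, (ne_of_lt hij).symm]
    · simp
  mul_mem' := by
    rintro A B ⟨hA1, hA2⟩ ⟨hB1, hB2⟩
    have hA : (A : Matrix (Fin n) (Fin n) R).BlockTriangular id := fun i j h => hA1 i j h
    have hB : (B : Matrix (Fin n) (Fin n) R).BlockTriangular id := fun i j h => hB1 i j h
    refine ⟨fun i j hij => ?_, fun i => ?_⟩
    · exact (hA.mul hB) (show (id : Fin n → Fin n) j < id i from hij)
    · rw [Units.val_mul, diag_mul_of_triangular hA hB, hA2, hB2, one_mul]
  inv_mem' := by
    rintro A ⟨hA1, hA2⟩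
    have hA : (A : Matrix (Fin n) (Fin n) R).BlockTriangular id := fun i j h => hA1 i j h
    haveI := A.invertible
    have hAinv : ((A : Matrix (Fin n) (Fin n) R)⁻¹).BlockTriangular id :=
      Matrix.blockTriangular_inv_of_blockTriangular hA
    have hcoe : ((A⁻¹ : (Matrix (Fin n) (Fin n) R)ˣ) : Matrix (Fin n) (Fin n) R)
        = (A : Matrix (Fin n) (Fin n) R)⁻¹ := Matrix.coe_units_inv A
    refine ⟨fun i j hij => ?_, fun i => ?_⟩
    · rw [hcoe]; exact hAinv (show (id : Fin n → Fin n) j < id i from hij)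
    · have h1 : ((A : Matrix (Fin n) (Fin n) R) * (A : Matrix (Fin n) (Fin n) R)⁻¹) i i = 1 := by
        rw [Matrix.mul_inv_of_invertible]; simp
      rw [diag_mul_of_triangular hA hAinv, hA2, one_mul] at h1
      rw [hcoe, h1]

/-- The group `T*(n,R)` of upper triangular `n × n` matrices over a linearly ordered field `R`
with positive diagonal entries, realised as a subgroup of the units of the matrix ring. -/
def Tstar (n : ℕ) (R : Type*) [Field R] [LinearOrder R] [IsStrictOrderedRing R] : Subgroup (Matrix (Fin n) (Fin n) R)ˣ where
  carrier := {A | (∀ i j : Fin n, j < i → (A : Matrix (Fin n) (Fin n) R) i j = 0) ∧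
    ∀ i : Fin n, 0 < (A : Matrix (Fin n) (Fin n) R) i i}
  one_mem' := by
    refine ⟨fun i j hij => ?_, fun i => ?_⟩
    · simp [Matrix.one_apply, (ne_of_lt hij).symm]
    · simp
  mul_mem' := by
    rintro A B ⟨hA1, hA2⟩ ⟨hB1, hB2⟩
    have hA : (A : Matrix (Fin n) (Fin n) R).BlockTriangular id := fun i j h => hA1 i j h
    have hB : (B : Matrix (Fin n) (Fin n) R).BlockTriangular id := fun i j h => hB1 i j h
    refine ⟨fun i j hij => ?_, fun i => ?_⟩
    · exact (hA.mul hB) (show (id : Fin n → Fin n) j < id i from hij)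
    · rw [Units.val_mul, diag_mul_of_triangular hA hB]
      exact mul_pos (hA2 i) (hB2 i)
  inv_mem' := by
    rintro A ⟨hA1, hA2⟩
    have hA : (A : Matrix (Fin n) (Fin n) R).BlockTriangular id := fun i j h => hA1 i j h
    haveI := A.invertible
    have hAinv : ((A : Matrix (Fin n) (Fin n) R)⁻¹).BlockTriangular id :=
      Matrix.blockTriangular_inv_of_blockTriangular hA
    have hcoe : ((A⁻¹ : (Matrix (Fin n) (Fin n) R)ˣ) : Matrix (Fin n) (Fin n) R)
        = (A : Matrix (Fin n) (Fin n) R)⁻¹ := Matrix.coe_units_inv A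
    refine ⟨fun i j hij => ?_, fun i => ?_⟩
    · rw [hcoe]; exact hAinv (show (id : Fin n → Fin n) j < id i from hij)
    · have h1 : ((A : Matrix (Fin n) (Fin n) R) * (A : Matrix (Fin n) (Fin n) R)⁻¹) i i = 1 := by
        rw [Matrix.mul_inv_of_invertible]; simp
      rw [diag_mul_of_triangular hA hAinv] at h1
      rw [hcoe]
      rcases lt_trichotomy ((A : Matrix (Fin n) (Fin n) R)⁻¹ i i) 0 with h | h | h
      · exact absurd h1 (by nlinarith [hA2 i])
      · rw [h, mul_zero] at h1; exact absurd h1 zero_ne_one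
      · exact h

/-- The last index of `Fin N` (any element of `Fin N` witnesses `0 < N`). -/
def lastOf {N : ℕ} (r : Fin N) : Fin N := ⟨N - 1, Nat.sub_lt r.pos Nat.one_pos⟩

/-- A square matrix `g` (upper triangular, with positive diagonal and bottom-right entry `1`)
is *essentially hyperbolic* if `g ≠ 1` and there is a row index `r` which is not the last row
such that `(g-1)_{r,N} ≠ 0` (where `N` is the last column) and every nonzero entry of `g - 1`
lies either in a row strictly above `r`, or at position `(r, N)`. -/
def EssentiallyHyperbolic {N : ℕ} {R : Type*} [CommRing R]
    (g : Matrix (Fin N) (Fin N) R) : Prop :=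
  g ≠ 1 ∧ ∃ r : Fin N, (r : ℕ) + 1 < N ∧ (g - 1) r (lastOf r) ≠ 0 ∧
    ∀ i j : Fin N, (g - 1) i j ≠ 0 → i < r ∨ (i = r ∧ j = lastOf r)

end Matrices

/-- The multiplicative group structure on `AddAut A` that older Mathlib provided
(multiplication is composition), restored here to keep the original meaning. -/
instance AddAut.groupOfComp (A : Type*) [Add A] : Group (AddAut A) where
  mul g h := AddEquiv.trans h g
  one := AddEquiv.refl A
  inv := AddEquiv.symm
  mul_assoc _ _ _ := rfl
  one_mul _ := rfl
  mul_one _ := rfl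
  inv_mul_cancel := AddEquiv.self_trans_symm

/-- The group of order-preserving additive automorphisms of a linearly ordered abelian
group `Λ`, as a subgroup of `AddAut Λ`. -/
def orderAddAut (Λ : Type*) [AddCommGroup Λ] [LinearOrder Λ] [IsOrderedAddMonoid Λ] : Subgroup (AddAut Λ) where
  carrier := {f | StrictMono f}
  one_mem' := strictMono_id
  mul_mem' := by
    intro f g hf hg a b hab
    exact hf (hg hab)
  inv_mem' := by
    intro f hf a b hab
    exact hf.lt_iff_lt.1 (by change f (f.symm a) < f (f.symm b); simpa using hab)

namespace EHAux

open Finset Matrix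

/-- Index of the pair `(i,j)` (with `i < j < n`) in our ordering: pairs sorted by
decreasing second coordinate, then increasing first coordinate. -/
def encP (n i j : ℕ) : ℕ := (∑ x ∈ Finset.Ico (j + 1) n, x) + i

lemma sum_Ico_le (n j : ℕ) (hj : j < n) :
    (∑ x ∈ Finset.Ico (j + 1) n, x) + j ≤ n * (n - 1) / 2 := by
  have h1 : (∑ x ∈ Finset.Ico j n, x) = j + ∑ x ∈ Finset.Ico (j + 1) n, x :=
    Finset.sum_eq_sum_Ico_succ_bot hj _
  have h2 : (∑ x ∈ Finset.Ico j n, x) ≤ ∑ x ∈ Finset.range n, x := by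
    apply Finset.sum_le_sum_of_subset
    intro x hx
    simp only [Finset.mem_Ico, Finset.mem_range] at hx ⊢
    omega
  rw [Finset.sum_range_id] at h2
  omega

lemma encP_lt (n : ℕ) {i j : ℕ} (hij : i < j) (hj : j < n) :
    encP n i j < n * (n - 1) / 2 := by
  have := sum_Ico_le n j hj
  unfold encP
  omega

lemma encP_lt_encP (n : ℕ) {i j i' j' : ℕ} (hij : i < j) (hj : j < n) (hj' : j' < j) :
    encP n i j < encP n i' j' := by
  have h1 : (∑ x ∈ Finset.Ico j n, x) ≤ ∑ x ∈ Finset.Ico (j' + 1) n, x := by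
    apply Finset.sum_le_sum_of_subset
    intro x hx
    simp only [Finset.mem_Ico] at hx ⊢
    omega
  have h2 : (∑ x ∈ Finset.Ico j n, x) = j + ∑ x ∈ Finset.Ico (j + 1) n, x :=
    Finset.sum_eq_sum_Ico_succ_bot hj _
  unfold encP
  omega

lemma encP_lt_encP_same (n : ℕ) {i i' j : ℕ} (hii : i < i') : encP n i j < encP n i' j := by
  unfold encP; omega

/-- The set of pairs `(i,j)` with `i < j` in `Fin n`. -/
abbrev Pn (n : ℕ) := {q : Fin n × Fin n // q.1 < q.2}

/-- The index type for the big matrices. -/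
abbrev In (n : ℕ) := Pn n ⊕ Unit

/-- The encoding of `In n` into `Fin (m+1)`. -/
def encF (n : ℕ) : In n → Fin (n * (n - 1) / 2 + 1)
  | .inl p => ⟨encP n p.1.1 p.1.2,
      by have := encP_lt n (show (p.1.1 : ℕ) < (p.1.2 : ℕ) from p.2) p.1.2.isLt; omega⟩
  | .inr _ => ⟨n * (n - 1) / 2, Nat.lt_succ_self _⟩

lemma encF_inj (n : ℕ) : Function.Injective (encF n) := by
  rintro (⟨⟨i, j⟩, hij⟩ | ⟨⟩) (⟨⟨i', j'⟩, hij'⟩ | ⟨⟩) h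
  · have h' : encP n (i : ℕ) (j : ℕ) = encP n (i' : ℕ) (j' : ℕ) := congrArg Fin.val h
    have hij : (i : ℕ) < j := hij
    have hij' : (i' : ℕ) < j' := hij'
    rcases lt_trichotomy (j : ℕ) (j' : ℕ) with hl | he | hl
    · have := encP_lt_encP n (i := (i' : ℕ)) (j := (j' : ℕ)) (i' := (i : ℕ)) (j' := (j : ℕ))
        hij' j'.isLt hl
      omega
    · have hi : (i : ℕ) = (i' : ℕ) := by unfold encP at h'; rw [he] at h'; omega
      exact congrArg Sum.inl (Subtype.ext (Prod.ext (Fin.ext hi) (Fin.ext he)))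
    · have := encP_lt_encP n (i := (i : ℕ)) (j := (j : ℕ)) (i' := (i' : ℕ)) (j' := (j' : ℕ))
        hij j.isLt hl
      omega
  · have h' : encP n (i : ℕ) (j : ℕ) = n * (n - 1) / 2 := congrArg Fin.val h
    have := encP_lt n (show (i : ℕ) < j from hij) j.isLt; omega
  · have h' : n * (n - 1) / 2 = encP n (i' : ℕ) (j' : ℕ) := congrArg Fin.val h
    have := encP_lt n (show (i' : ℕ) < j' from hij') j'.isLt; omega
  · rfl

/-- `Pn n` is equivalent to a sigma type, used to count it. -/
def pairEquivSigma (n : ℕ) : Pn n ≃ Σ j : Fin n, Fin (j : ℕ) where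
  toFun p := ⟨p.1.2, ⟨p.1.1, p.2⟩⟩
  invFun s := ⟨(⟨(s.2 : ℕ), lt_trans s.2.isLt s.1.isLt⟩, s.1), s.2.isLt⟩
  left_inv := by rintro ⟨⟨i, j⟩, h⟩; rfl
  right_inv := by rintro ⟨j, i⟩; rfl

lemma card_Pn (n : ℕ) : Fintype.card (Pn n) = n * (n - 1) / 2 := by
  rw [Fintype.card_congr (pairEquivSigma n), Fintype.card_sigma]
  simp only [Fintype.card_fin]
  rw [Fin.sum_univ_eq_sum_range (fun i => i) n, Finset.sum_range_id]

/-- The order-preserving bijection `In n ≃ Fin (m+1)`. -/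
noncomputable def eI (n : ℕ) : In n ≃ Fin (n * (n - 1) / 2 + 1) :=
  Equiv.ofBijective (encF n) ((Fintype.bijective_iff_injective_and_card _).2
    ⟨encF_inj n, by
      rw [Fintype.card_sum, card_Pn, Fintype.card_unit, Fintype.card_fin]⟩)

lemma eI_apply (n : ℕ) (x : In n) : eI n x = encF n x := rfl

/-- The abstract matrix associated to `h`. -/
def Mabs (n : ℕ) (h : Matrix (Fin n) (Fin n) ℚ) : Matrix (In n) (In n) ℚ :=
  Matrix.of fun p q =>
    match p, q with
    | .inl p, .inl q => if p.1.1 = q.1.1 then h q.1.2 p.1.2 else 0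
    | .inl p, .inr _ => h p.1.1 p.1.2
    | .inr _, .inl _ => 0
    | .inr _, .inr _ => 1

@[simp] lemma Mabs_ll (n : ℕ) (h : Matrix (Fin n) (Fin n) ℚ) (p q : Pn n) :
    Mabs n h (.inl p) (.inl q) = if p.1.1 = q.1.1 then h q.1.2 p.1.2 else 0 := rfl
@[simp] lemma Mabs_lr (n : ℕ) (h : Matrix (Fin n) (Fin n) ℚ) (p : Pn n) (u : Unit) :
    Mabs n h (.inl p) (.inr u) = h p.1.1 p.1.2 := rfl
@[simp] lemma Mabs_rl (n : ℕ) (h : Matrix (Fin n) (Fin n) ℚ) (u : Unit) (q : Pn n) :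
    Mabs n h (.inr u) (.inl q) = 0 := rfl
@[simp] lemma Mabs_rr (n : ℕ) (h : Matrix (Fin n) (Fin n) ℚ) (u v : Unit) :
    Mabs n h (.inr u) (.inr v) = 1 := rfl

lemma sum_pairs (n : ℕ) (F : Fin n × Fin n → ℚ) (hF : ∀ a b : Fin n, ¬ a < b → F (a, b) = 0) :
    ∑ x : Pn n, F x.1 = ∑ a : Fin n, ∑ b : Fin n, F (a, b) := by
  rw [← Finset.sum_subtype (Finset.univ.filter fun q : Fin n × Fin n => q.1 < q.2)
    (by simp) F]
  rw [Finset.sum_filter, Fintype.sum_prod_type]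
  refine Finset.sum_congr rfl fun a _ => Finset.sum_congr rfl fun b _ => ?_
  by_cases hab : a < b
  · simp [hab]
  · simp [hab, hF a b hab]

lemma Mabs_one (n : ℕ) : Mabs n 1 = 1 := by
  ext p q
  cases p with
  | inl p =>
    cases q with
    | inl q =>
      rcases p with ⟨⟨i, j⟩, hij⟩
      rcases q with ⟨⟨i', j'⟩, hij'⟩
      rw [Mabs_ll, Matrix.one_apply]
      by_cases hii : i = i'
      · by_cases hjj : j = j'
        · subst hii; subst hjj; simp [Matrix.one_apply]
        · subst hii
          simp [Matrix.one_apply, hjj, Ne.symm hjj, Sum.inl.injEq, Subtype.ext_iff,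
            Prod.ext_iff]
      · simp [Matrix.one_apply, hii, Sum.inl.injEq, Subtype.ext_iff, Prod.ext_iff]
    | inr u =>
      rcases p with ⟨⟨i, j⟩, hij⟩
      rw [Mabs_lr, Matrix.one_apply_ne (ne_of_lt hij)]
      simp [Matrix.one_apply]
  | inr u =>
    cases q with
    | inl q => simp [Matrix.one_apply]
    | inr v => simp [Matrix.one_apply]

lemma Mabs_mul (n : ℕ) (h₁ h₂ : Matrix (Fin n) (Fin n) ℚ)
    (hlow : ∀ i j : Fin n, j < i → h₂ i j = 0) (hdiag : ∀ i : Fin n, h₂ i i = 1) :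
    Mabs n h₁ * Mabs n h₂ = Mabs n (h₂ * h₁) := by
  ext p q
  rw [Matrix.mul_apply, Fintype.sum_sum_type]
  cases p with
  | inr u =>
    cases q with
    | inl q => simp
    | inr v => simp
  | inl p =>
    rcases p with ⟨⟨i, j⟩, hij⟩
    cases q with
    | inl q =>
      rcases q with ⟨⟨i', k⟩, hik⟩
      simp only [Mabs_ll, Mabs_lr, Mabs_rl, Mabs_rr, mul_zero, Finset.sum_const,
        Finset.card_univ, Fintype.card_unit, one_smul, add_zero, smul_eq_mul]
      by_cases hii : i = i'
      · subst hii
        rw [if_pos rfl, Matrix.mul_apply]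
        have hs := sum_pairs n
          (fun ab => (if i = ab.1 then h₁ ab.2 j else 0) * (if ab.1 = i then h₂ k ab.2 else 0))
          (by
            intro a b hab
            by_cases ha : i = a
            · subst ha
              have hbk : b < k := lt_of_le_of_lt (not_lt.mp hab) hik
              simp [hlow k b hbk]
            · simp [ha])
        rw [hs, Finset.sum_eq_single i]
        · refine Finset.sum_congr rfl fun b _ => ?_
          simp [mul_comm]
        · intro a _ ha
          rw [Finset.sum_eq_zero]
          intro b _
          simp [Ne.symm ha]
        · intro habs; exact absurd (Finset.mem_univ i) habs
      · rw [if_neg hii, Finset.sum_eq_zero]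
        intro x _
        by_cases hx : i = x.1.1
        · have hne : ¬ (x.1.1 = i') := fun hc => hii (hx.trans hc)
          rw [if_neg hne, mul_zero]
        · rw [if_neg hx, zero_mul]
    | inr u =>
      simp only [Mabs_ll, Mabs_lr, Mabs_rl, Mabs_rr, mul_one, Finset.sum_const,
        Finset.card_univ, Fintype.card_unit, one_smul, smul_eq_mul]
      rw [Matrix.mul_apply]
      have hvan : ∀ a b : Fin n, ¬ a < b →
          (fun ab : Fin n × Fin n =>
            if i = ab.1 ∧ ab.1 ≠ ab.2 then h₂ ab.1 ab.2 * h₁ ab.2 j else 0) (a, b) = 0 := by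
        intro a b hab
        by_cases hc : i = a ∧ a ≠ b
        · have hba : b < a := lt_of_le_of_ne (not_lt.mp hab) (Ne.symm hc.2)
          simp only
          rw [if_pos hc, hlow a b hba, zero_mul]
        · simp only
          rw [if_neg hc]
      have hsp := sum_pairs n
        (fun ab : Fin n × Fin n =>
          if i = ab.1 ∧ ab.1 ≠ ab.2 then h₂ ab.1 ab.2 * h₁ ab.2 j else 0) hvan
      simp only at hsp
      have hs : (∑ x : Pn n, (if i = x.1.1 then h₁ x.1.2 j else 0) * h₂ x.1.1 x.1.2)
          = ∑ x : Pn n, if i = x.1.1 ∧ x.1.1 ≠ x.1.2 then h₂ x.1.1 x.1.2 * h₁ x.1.2 j else 0 := by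
        refine Finset.sum_congr rfl fun x _ => ?_
        have hne : x.1.1 ≠ x.1.2 := ne_of_lt x.2
        by_cases hx : i = x.1.1
        · rw [if_pos hx, if_pos ⟨hx, hne⟩, mul_comm]
        · rw [if_neg hx, if_neg (by tauto), zero_mul]
      rw [hs, hsp, Finset.sum_eq_single i]
      · have hsplit : ∀ l : Fin n, h₂ i l * h₁ l j =
            (if i = i ∧ i ≠ l then h₂ i l * h₁ l j else 0)
              + (if l = i then h₂ i l * h₁ l j else 0) := by
          intro l
          by_cases hl : l = i
          · subst hl; simp
          · simp [hl, Ne.symm hl]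
        calc (∑ b : Fin n, if i = i ∧ i ≠ b then h₂ i b * h₁ b j else 0) + h₁ i j
            = (∑ b : Fin n, if i = i ∧ i ≠ b then h₂ i b * h₁ b j else 0)
              + ∑ b : Fin n, (if b = i then h₂ i b * h₁ b j else 0) := by
              rw [Finset.sum_ite_eq' Finset.univ i]
              simp [hdiag i]
          _ = ∑ b : Fin n, h₂ i b * h₁ b j := by
              rw [← Finset.sum_add_distrib]
              exact Finset.sum_congr rfl fun b _ => (hsplit b).symm
      · intro a _ ha
        rw [Finset.sum_eq_zero]
        intro b _
        simp [Ne.symm ha]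
      · intro habs; exact absurd (Finset.mem_univ i) habs

end EHAux

namespace EHAux

open Finset Matrix

/-- The underlying matrix of an element of `UT n ℚ`. -/
def mat (n : ℕ) (g : UT n ℚ) : Matrix (Fin n) (Fin n) ℚ :=
  ((g : (Matrix (Fin n) (Fin n) ℚ)ˣ) : Matrix (Fin n) (Fin n) ℚ)

lemma mat_low (n : ℕ) (g : UT n ℚ) : ∀ i j : Fin n, j < i → mat n g i j = 0 := g.2.1
lemma mat_diag (n : ℕ) (g : UT n ℚ) : ∀ i : Fin n, mat n g i i = 1 := g.2.2
lemma mat_mul (n : ℕ) (g h : UT n ℚ) : mat n (g * h) = mat n g * mat n h := rfl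
lemma mat_one (n : ℕ) : mat n (1 : UT n ℚ) = 1 := rfl
lemma mat_inj (n : ℕ) : Function.Injective (mat n) := fun g h hgh =>
  Subtype.ext (Units.ext hgh)

/-- The big matrix associated to `g`. -/
noncomputable def Phi (n : ℕ) (g : UT n ℚ) :
    Matrix (Fin (n * (n - 1) / 2 + 1)) (Fin (n * (n - 1) / 2 + 1)) ℚ :=
  (Mabs n (mat n g⁻¹)).submatrix (eI n).symm (eI n).symm

lemma Phi_apply (n : ℕ) (g : UT n ℚ) (p q : In n) :
    Phi n g (eI n p) (eI n q) = Mabs n (mat n g⁻¹) p q := by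
  rw [Phi, Matrix.submatrix_apply, Equiv.symm_apply_apply, Equiv.symm_apply_apply]

lemma Phi_mul (n : ℕ) (g h : UT n ℚ) : Phi n g * Phi n h = Phi n (g * h) := by
  rw [Phi, Phi, Phi, Matrix.submatrix_mul_equiv]
  congr 1
  rw [Mabs_mul n _ _ (mat_low n h⁻¹) (mat_diag n h⁻¹), ← mat_mul, _root_.mul_inv_rev]

lemma Phi_one (n : ℕ) : Phi n 1 = 1 := by
  rw [Phi, inv_one, mat_one, Mabs_one, Matrix.submatrix_one_equiv]

/-- `Phi n g` as a unit. -/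
noncomputable def phiU (n : ℕ) (g : UT n ℚ) :
    (Matrix (Fin (n * (n - 1) / 2 + 1)) (Fin (n * (n - 1) / 2 + 1)) ℚ)ˣ where
  val := Phi n g
  inv := Phi n g⁻¹
  val_inv := by rw [Phi_mul, mul_inv_cancel, Phi_one]
  inv_val := by rw [Phi_mul, inv_mul_cancel, Phi_one]

lemma phiU_mem (n : ℕ) (g : UT n ℚ) : phiU n g ∈ UT (n * (n - 1) / 2 + 1) ℚ := by
  constructor
  · intro a b hba
    obtain ⟨p, rfl⟩ := (eI n).surjective a
    obtain ⟨q, rfl⟩ := (eI n).surjective b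
    show Phi n g (eI n p) (eI n q) = 0
    rw [Phi_apply]
    cases p with
    | inr u =>
      cases q with
      | inl q => exact Mabs_rl n _ u q
      | inr v =>
        exfalso
        cases u; cases v
        exact lt_irrefl _ hba
    | inl p =>
      rcases p with ⟨⟨i, j⟩, hij⟩
      cases q with
      | inr u =>
        exfalso
        have h1 : encP n (i : ℕ) (j : ℕ) < n * (n - 1) / 2 :=
          encP_lt n (show (i : ℕ) < (j : ℕ) from hij) j.isLt
        have h2 : (n * (n - 1) / 2 : ℕ) < encP n (i : ℕ) (j : ℕ) := hba
        omega
      | inl q =>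
        rcases q with ⟨⟨i', k⟩, hik⟩
        rw [Mabs_ll]
        by_cases hii : (i : Fin n) = i'
        · rw [if_pos hii]
          have hiv : (i : ℕ) = (i' : ℕ) := congrArg Fin.val hii
          have hba' : encP n (i' : ℕ) (k : ℕ) < encP n (i : ℕ) (j : ℕ) := hba
          rcases lt_trichotomy (k : ℕ) (j : ℕ) with hkj | hkj | hkj
          · exfalso
            have := encP_lt_encP n (i := (i : ℕ)) (j := (j : ℕ)) (i' := (i' : ℕ))
              (j' := (k : ℕ)) hij j.isLt hkj
            omega
          · exfalso
            unfold encP at hba'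
            rw [hkj] at hba'
            omega
          · exact mat_low n g⁻¹ k j hkj
        · rw [if_neg hii]
  · intro a
    obtain ⟨p, rfl⟩ := (eI n).surjective a
    show Phi n g (eI n p) (eI n p) = 1
    rw [Phi_apply]
    cases p with
    | inl p => rw [Mabs_ll, if_pos rfl, mat_diag]
    | inr u => exact Mabs_rr n _ u u

/-- The embedding as a monoid hom into `UT (m+1) ℚ`. -/
noncomputable def φh (n : ℕ) : UT n ℚ →* UT (n * (n - 1) / 2 + 1) ℚ where
  toFun g := ⟨phiU n g, phiU_mem n g⟩
  map_one' := Subtype.ext (Units.ext (Phi_one n))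
  map_mul' g h := Subtype.ext (Units.ext (Phi_mul n g h).symm)

lemma eI_inl_ne_inr (n : ℕ) (p : Pn n) : eI n (.inl p) ≠ eI n (.inr ()) := by
  intro hc
  have h1 : encP n (p.1.1 : ℕ) (p.1.2 : ℕ) = n * (n - 1) / 2 := congrArg Fin.val hc
  have h2 := encP_lt n (show (p.1.1 : ℕ) < (p.1.2 : ℕ) from p.2) p.1.2.isLt
  omega

lemma mat_inv_eq_one (n : ℕ) {g : UT n ℚ}
    (hoff : ∀ i j : Fin n, i < j → mat n g⁻¹ i j = 0) : g = 1 := by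
  have h1 : mat n g⁻¹ = 1 := by
    ext i j
    rcases lt_trichotomy i j with hlt | heq | hlt
    · rw [hoff i j hlt, Matrix.one_apply_ne (ne_of_lt hlt)]
    · subst heq; rw [mat_diag, Matrix.one_apply_eq]
    · rw [mat_low n g⁻¹ i j hlt, Matrix.one_apply_ne (ne_of_gt hlt)]
  have h2 : g⁻¹ = 1 := mat_inj n (by rw [h1, mat_one])
  exact inv_eq_one.mp h2

lemma φh_inj (n : ℕ) : Function.Injective (φh n) := by
  rw [injective_iff_map_eq_one]
  intro g hg
  have hPhi : Phi n g = 1 := congrArg (fun x : UT (n * (n - 1) / 2 + 1) ℚ =>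
    ((x : (Matrix (Fin (n * (n - 1) / 2 + 1)) (Fin (n * (n - 1) / 2 + 1)) ℚ)ˣ) :
      Matrix (Fin (n * (n - 1) / 2 + 1)) (Fin (n * (n - 1) / 2 + 1)) ℚ)) hg
  apply mat_inv_eq_one n
  intro i j hij
  have h1 := congrFun (congrFun hPhi (eI n (.inl ⟨(i, j), hij⟩))) (eI n (.inr ()))
  rw [Phi_apply, Mabs_lr, Matrix.one_apply_ne (eI_inl_ne_inr n ⟨(i, j), hij⟩)] at h1
  exact h1

lemma encF_lt_encF (n : ℕ) {p q : Pn n}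
    (h : encP n (p.1.1 : ℕ) (p.1.2 : ℕ) < encP n (q.1.1 : ℕ) (q.1.2 : ℕ)) :
    eI n (.inl p) < eI n (.inl q) := h

lemma Phi_eh (n : ℕ) (g : UT n ℚ) (hg : g ≠ 1) : EssentiallyHyperbolic (Phi n g) := by
  classical
  have hex : ∃ q : Pn n, mat n g⁻¹ q.1.1 q.1.2 ≠ 0 := by
    by_contra hc
    push_neg at hc
    exact hg (mat_inv_eq_one n fun i j hij => hc ⟨(i, j), hij⟩)
  set T : Finset (Fin n) :=
    Finset.univ.filter (fun j => ∃ i : Fin n, i < j ∧ mat n g⁻¹ i j ≠ 0) with hT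
  have hTne : T.Nonempty := by
    obtain ⟨⟨⟨i, j⟩, hij⟩, hq⟩ := hex
    exact ⟨j, Finset.mem_filter.mpr ⟨Finset.mem_univ _, ⟨i, hij, hq⟩⟩⟩
  set j₀ := T.min' hTne with hj₀def
  have hj₀ : ∃ i : Fin n, i < j₀ ∧ mat n g⁻¹ i j₀ ≠ 0 :=
    (Finset.mem_filter.mp (T.min'_mem hTne)).2
  have hj₀min : ∀ j : Fin n, (∃ i : Fin n, i < j ∧ mat n g⁻¹ i j ≠ 0) → j₀ ≤ j :=
    fun j hj => T.min'_le j (Finset.mem_filter.mpr ⟨Finset.mem_univ _, hj⟩)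
  set S : Finset (Fin n) :=
    Finset.univ.filter (fun i => i < j₀ ∧ mat n g⁻¹ i j₀ ≠ 0) with hS
  have hSne : S.Nonempty := by
    obtain ⟨i, hi⟩ := hj₀
    exact ⟨i, Finset.mem_filter.mpr ⟨Finset.mem_univ _, hi⟩⟩
  set i₀ := S.max' hSne with hi₀def
  have hi₀p := (Finset.mem_filter.mp (S.max'_mem hSne)).2
  have hi₀lt : i₀ < j₀ := hi₀p.1
  have hi₀ne : mat n g⁻¹ i₀ j₀ ≠ 0 := hi₀p.2
  have hi₀max : ∀ i : Fin n, i < j₀ → mat n g⁻¹ i j₀ ≠ 0 → i ≤ i₀ :=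
    fun i h1 h2 => S.le_max' i (Finset.mem_filter.mpr ⟨Finset.mem_univ _, h1, h2⟩)
  set r : Fin (n * (n - 1) / 2 + 1) := eI n (.inl ⟨(i₀, j₀), hi₀lt⟩) with hrdef
  have hrval : (r : ℕ) = encP n (i₀ : ℕ) (j₀ : ℕ) := rfl
  have hrlt : (r : ℕ) < n * (n - 1) / 2 := by
    rw [hrval]
    exact encP_lt n (show (i₀ : ℕ) < (j₀ : ℕ) from hi₀lt) j₀.isLt
  have hlast : lastOf r = eI n (.inr ()) := by
    apply Fin.ext
    show n * (n - 1) / 2 + 1 - 1 = n * (n - 1) / 2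
    omega
  have e1 : Phi n g r (eI n (.inr ())) = mat n g⁻¹ i₀ j₀ := by
    rw [hrdef, Phi_apply, Mabs_lr]
  have e2 : (1 : Matrix (Fin (n * (n - 1) / 2 + 1)) (Fin (n * (n - 1) / 2 + 1)) ℚ)
      r (eI n (.inr ())) = 0 := by
    rw [hrdef]
    exact Matrix.one_apply_ne (eI_inl_ne_inr n _)
  refine ⟨?_, r, by omega, ?_, ?_⟩
  · intro hc
    apply hi₀ne
    rw [← e1, hc, e2]
  · rw [hlast, Matrix.sub_apply, e1, e2, sub_zero]
    exact hi₀ne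
  · intro a b hab
    obtain ⟨p, rfl⟩ := (eI n).surjective a
    obtain ⟨q, rfl⟩ := (eI n).surjective b
    rw [Matrix.sub_apply, Phi_apply] at hab
    cases p with
    | inr u =>
      exfalso
      cases u
      cases q with
      | inl q =>
        rw [Mabs_rl, Matrix.one_apply_ne (Ne.symm (eI_inl_ne_inr n q)), sub_zero] at hab
        exact hab rfl
      | inr v =>
        cases v
        rw [Mabs_rr, Matrix.one_apply_eq] at hab
        exact hab (sub_self 1)
    | inl p =>
      rcases p with ⟨⟨i, j⟩, hij⟩
      cases q with
      | inr u =>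
        cases u
        rw [Mabs_lr, Matrix.one_apply_ne (eI_inl_ne_inr n _), sub_zero] at hab
        have hjmem : j₀ ≤ j := hj₀min j ⟨i, hij, hab⟩
        rcases lt_or_eq_of_le hjmem with hjlt | hjeq
        · left
          rw [hrdef]
          exact encF_lt_encF n (encP_lt_encP n (show (i : ℕ) < (j : ℕ) from hij)
            j.isLt hjlt)
        · have hile : i ≤ i₀ := hi₀max i (by rw [hjeq]; exact hij)
            (by rw [hjeq]; exact hab)
          rcases lt_or_eq_of_le hile with hilt | hieq
          · left
            rw [hrdef]
            exact encF_lt_encF n (by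
              have hiv : (i : ℕ) < (i₀ : ℕ) := hilt
              have hjv : (j₀ : ℕ) = (j : ℕ) := congrArg Fin.val hjeq
              show encP n (i : ℕ) (j : ℕ) < encP n (i₀ : ℕ) (j₀ : ℕ)
              rw [← hjv]
              exact encP_lt_encP_same n hiv)
          · right
            constructor
            · rw [hrdef]
              exact congrArg (eI n) (congrArg Sum.inl (Subtype.ext
                (Prod.ext (show i = i₀ from hieq) (show j = j₀ from hjeq.symm))))
            · exact hlast.symm
      | inl q =>
        rcases q with ⟨⟨i', k⟩, hik⟩
        by_cases heq : (Sum.inl ⟨(i, j), hij⟩ : In n) = Sum.inl ⟨(i', k), hik⟩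
        · exfalso
          apply hab
          have hq : (⟨(i, j), hij⟩ : Pn n) = ⟨(i', k), hik⟩ := by
            injection heq
          rw [← hq, Mabs_ll, if_pos rfl, mat_diag, Matrix.one_apply_eq, sub_self]
        · have hne : eI n (Sum.inl ⟨(i, j), hij⟩) ≠ eI n (Sum.inl ⟨(i', k), hik⟩) :=
            fun hc => heq ((eI n).injective hc)
          rw [Mabs_ll, Matrix.one_apply_ne hne, sub_zero] at hab
          have hii : (i : Fin n) = i' := by
            by_contra hc
            rw [if_neg hc] at hab
            exact hab rfl
          rw [if_pos hii] at hab
          have hkj : (k : ℕ) < (j : ℕ) := by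
            rcases lt_trichotomy (k : ℕ) (j : ℕ) with h1 | h1 | h1
            · exact h1
            · exfalso
              apply heq
              exact congrArg Sum.inl (Subtype.ext (Prod.ext hii (Fin.ext h1.symm)))
            · exfalso
              exact hab (mat_low n g⁻¹ k j h1)
          have hik' : (i : ℕ) < (k : ℕ) := by
            have : (i' : ℕ) < (k : ℕ) := hik
            rw [congrArg Fin.val hii]
            exact this
          have hjmem : j₀ ≤ j := hj₀min j ⟨k, hkj, hab⟩
          rcases lt_or_eq_of_le hjmem with hjlt | hjeq
          · left
            rw [hrdef]
            exact encF_lt_encF n (encP_lt_encP n (show (i : ℕ) < (j : ℕ) from hij)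
              j.isLt hjlt)
          · left
            have hkle : k ≤ i₀ := hi₀max k (by rw [hjeq]; exact hkj)
              (by rw [hjeq]; exact hab)
            have hii₀ : (i : ℕ) < (i₀ : ℕ) := lt_of_lt_of_le hik' hkle
            rw [hrdef]
            exact encF_lt_encF n (by
              have hjv : (j₀ : ℕ) = (j : ℕ) := congrArg Fin.val hjeq
              show encP n (i : ℕ) (j : ℕ) < encP n (i₀ : ℕ) (j₀ : ℕ)
              rw [← hjv]
              exact encP_lt_encP_same n hii₀)

end EHAux


/-- For `n ≥ 1` and `m = n(n-1)/2` there is an injective group homomorphism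
`φ : UT(n,ℚ) → UT(m+1,ℚ)` such that `φ g` is essentially hyperbolic for every `g ≠ 1`. -/
theorem UT_rat_embeds_essentiallyHyperbolically (n : ℕ) (hn : 1 ≤ n) :
    ∃ φ : UT n ℚ →* UT (n * (n - 1) / 2 + 1) ℚ,
      Function.Injective φ ∧
      ∀ g : UT n ℚ, g ≠ 1 →
        EssentiallyHyperbolic
          (((φ g : UT (n * (n - 1) / 2 + 1) ℚ) :
              (Matrix (Fin (n * (n - 1) / 2 + 1)) (Fin (n * (n - 1) / 2 + 1)) ℚ)ˣ) :
            Matrix (Fin (n * (n - 1) / 2 + 1)) (Fin (n * (n - 1) / 2 + 1)) ℚ) := by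
  exact ⟨EHAux.φh n, EHAux.φh_inj n, fun g hg => EHAux.Phi_eh n g hg⟩
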